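/- For nonnegative integers k, n with 0 ≤ n ≤ k and k - n even, the coefficient of L_n in the Legendre expansion of y^k equals binomial(k,n) · n! · sqrt(2n+1) · (k-n-1)!! / (k+n+1)!!. -/

import Mathlib

open MeasureTheory Real Filter

/-- The `n`-th orthonormal Legendre polynomial on `[-1,1]` w.r.t. weight `1/2`,
via Rodrigues' formula. -/
noncomputable def L (n : ℕ) : ℝ → ℝ := fun y =>
  (Real.sqrt (2 * n + 1) / ((2 : ℝ) ^ n * n.factorial)) *
    iteratedDeriv n (fun t : ℝ => (t ^ 2 - 1) ^ n) y

open Polynomial in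
noncomputable def Qaux (n : ℕ) : ℝ[X] := (X ^ 2 - 1) ^ n

open Polynomial in
lemma iterEval (p : ℝ[X]) (j : ℕ) :
    iteratedDeriv j (fun t : ℝ => eval t p) = fun t => eval t (derivative^[j] p) := by
  induction j with
  | zero => simp
  | succ j ih =>
    rw [iteratedDeriv_succ, ih]
    funext t
    rw [Function.iterate_succ_apply']
    exact Polynomial.deriv _

open Polynomial in
lemma Qdvd (n j : ℕ) (hj : j ≤ n) :
    ∃ q : ℝ[X], derivative^[j] (Qaux n) = (X ^ 2 - 1) ^ (n - j) * q := by
  induction j with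
  | zero => exact ⟨1, by simp [Qaux]⟩
  | succ j ih =>
    obtain ⟨q, hq⟩ := ih (Nat.le_of_succ_le hj)
    obtain ⟨m, hm⟩ : ∃ m, n - j = m + 1 := ⟨n - (j+1), by omega⟩
    refine ⟨C ((m:ℝ)+1) * (2 * X) * q + (X ^ 2 - 1) * derivative q, ?_⟩
    rw [Function.iterate_succ_apply', hq, hm]
    have h2 : n - (j + 1) = m := by omega
    rw [h2]
    simp only [derivative_mul, derivative_pow, derivative_sub, derivative_one,
      derivative_X_pow, derivative_X, Nat.cast_add, C_add, C_1, Nat.add_sub_cancel]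
    simp only [Nat.cast_ofNat, Nat.cast_one, map_one, map_ofNat]
    ring

open Polynomial in
lemma Qeval_zero (n j : ℕ) (hj : j < n) (x : ℝ) (hx : x ^ 2 = 1) :
    eval x (derivative^[j] (Qaux n)) = 0 := by
  obtain ⟨q, hq⟩ := Qdvd n j hj.le
  rw [hq]
  obtain ⟨m, hm⟩ : ∃ m, n - j = m + 1 := ⟨n - (j+1), by omega⟩
  simp [hm, hx]

open Polynomial in
lemma parts (k n : ℕ) : ∀ j, j ≤ n →
    (∫ y in (-1:ℝ)..1, y ^ k * eval y (derivative^[n] (Qaux n)))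
      = (-1)^j * (k.descFactorial j : ℝ) *
        ∫ y in (-1:ℝ)..1, y ^ (k-j) * eval y (derivative^[n-j] (Qaux n)) := by
  intro j hj
  induction j with
  | zero => simp
  | succ j ihj =>
    rw [ihj (by omega)]
    have hstep : (∫ y in (-1:ℝ)..1, y ^ (k-j) * eval y (derivative^[n-j] (Qaux n)))
        = -(((k-j:ℕ)):ℝ) *
          ∫ y in (-1:ℝ)..1, y ^ (k-(j+1)) * eval y (derivative^[n-(j+1)] (Qaux n)) := by
      have hnj : n - j = (n - (j+1)) + 1 := by omega
      have hu : ∀ x ∈ Set.uIcc (-1:ℝ) 1,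
          HasDerivAt (fun y:ℝ => y^(k-j)) (((k-j:ℕ):ℝ) * x^(k-j-1)) x :=
        fun x _ => hasDerivAt_pow _ x
      have hv : ∀ x ∈ Set.uIcc (-1:ℝ) 1,
          HasDerivAt (fun y:ℝ => eval y (derivative^[n-(j+1)] (Qaux n)))
            (eval x (derivative^[n-j] (Qaux n))) x := by
        intro x _
        have h := Polynomial.hasDerivAt (derivative^[n-(j+1)] (Qaux n)) x
        rw [hnj, Function.iterate_succ_apply']
        exact h
      have hiu : IntervalIntegrable (fun x : ℝ => ((k-j:ℕ):ℝ) * x^(k-j-1)) volume (-1) 1 :=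
        (by fun_prop : Continuous fun x : ℝ => ((k-j:ℕ):ℝ) * x^(k-j-1)).intervalIntegrable _ _
      have hiv : IntervalIntegrable (fun x : ℝ => eval x (derivative^[n-j] (Qaux n)))
          volume (-1) 1 :=
        ((derivative^[n-j] (Qaux n)).continuous_aeval.intervalIntegrable _ _)
      have key := intervalIntegral.integral_mul_deriv_eq_deriv_mul hu hv hiu hiv
      have hb1 : eval (1:ℝ) (derivative^[n-(j+1)] (Qaux n)) = 0 :=
        Qeval_zero n _ (by omega) 1 (by norm_num)
      have hb2 : eval (-1:ℝ) (derivative^[n-(j+1)] (Qaux n)) = 0 :=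
        Qeval_zero n _ (by omega) (-1) (by norm_num)
      rw [hb1, hb2, mul_zero, mul_zero, sub_zero, zero_sub] at key
      rw [key, ← intervalIntegral.integral_const_mul, ← intervalIntegral.integral_neg]
      congr 1; funext x
      rw [show k - j - 1 = k - (j+1) from by omega]
      ring
    rw [hstep]
    rw [Nat.descFactorial_succ]
    push_cast
    ring

lemma intA (b : ℕ) : ∀ m : ℕ, Even m →
    (∫ y in (-1:ℝ)..1, y ^ m * (y ^ 2 - 1) ^ b) =
      (-1)^b * 2 * (Nat.doubleFactorial (m-1) : ℝ) * (Nat.doubleFactorial (2*b) : ℝ)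
        / (Nat.doubleFactorial (m+2*b+1) : ℝ) := by
  induction b with
  | zero =>
    intro m hm
    have hne : ((Nat.doubleFactorial (m-1) : ℝ)) ≠ 0 := by
      exact_mod_cast (Nat.doubleFactorial_pos _).ne'
    have hm1 : ((m:ℝ) + 1) ≠ 0 := by positivity
    simp only [pow_zero, mul_one]
    rw [integral_pow]
    have hodd : Odd (m + 1) := hm.add_one
    rw [show ((-1:ℝ))^(m+1) = -1 from hodd.neg_one_pow]
    rw [show m + 2*0 + 1 = m + 1 from by ring, Nat.doubleFactorial_add_one]
    push_cast
    field_simp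
    simp only [Nat.doubleFactorial, Nat.cast_one]
    ring
  | succ b ih =>
    intro m hm
    have hm1 : ((m:ℝ) + 1) ≠ 0 := by positivity
    set u' : ℝ → ℝ := fun x => ((b:ℝ)+1) * (x^2-1)^b * (2*x) with hu'
    have hu : ∀ x ∈ Set.uIcc (-1:ℝ) 1, HasDerivAt (fun y : ℝ => (y^2-1)^(b+1)) (u' x) x := by
      intro x _
      have h := ((hasDerivAt_pow 2 x).sub_const 1).pow (b+1)
      simpa [hu', Pi.pow_def] using h
    have hv : ∀ x ∈ Set.uIcc (-1:ℝ) 1, HasDerivAt (fun y : ℝ => y^(m+1)/((m:ℝ)+1)) (x^m) x := by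
      intro x _
      have h := (hasDerivAt_pow (m+1) x).div_const ((m:ℝ)+1)
      refine h.congr_deriv ?_
      push_cast
      field_simp
    have hiu : IntervalIntegrable u' volume (-1) 1 :=
      (by fun_prop : Continuous u').intervalIntegrable _ _
    have hiv : IntervalIntegrable (fun x : ℝ => x^m) volume (-1) 1 :=
      (by fun_prop : Continuous fun x : ℝ => x^m).intervalIntegrable _ _
    have key := intervalIntegral.integral_mul_deriv_eq_deriv_mul hu hv hiu hiv
    simp only [one_pow, neg_one_sq, sub_self, zero_pow, Nat.succ_ne_zero, zero_mul, mul_zero,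
      sub_zero, zero_sub] at key
    have hcomm : (∫ y in (-1:ℝ)..1, y ^ m * (y ^ 2 - 1) ^ (b+1))
        = ∫ y in (-1:ℝ)..1, (y ^ 2 - 1) ^ (b+1) * y ^ m := by
      congr 1; funext y; ring
    rw [hcomm, key]
    have hr : (∫ x in (-1:ℝ)..1, u' x * (x^(m+1)/((m:ℝ)+1)))
        = (2*((b:ℝ)+1)/((m:ℝ)+1)) * ∫ x in (-1:ℝ)..1, x^(m+2) * (x^2-1)^b := by
      rw [← intervalIntegral.integral_const_mul]
      congr 1; funext x
      simp only [hu']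
      field_simp
      ring
    rw [hr, ih (m+2) (by simpa using hm.add (by decide : Even 2))]
    have hne : ((Nat.doubleFactorial (m-1) : ℝ)) ≠ 0 := by
      exact_mod_cast (Nat.doubleFactorial_pos _).ne'
    have hne2 : ((Nat.doubleFactorial (m+2*(b+1)+1) : ℝ)) ≠ 0 := by
      exact_mod_cast (Nat.doubleFactorial_pos _).ne'
    rw [show m+2-1 = m+1 from by omega, Nat.doubleFactorial_add_one,
      show m+2+2*b+1 = m+2*(b+1)+1 from by ring,
      show 2*(b+1) = 2*b+2 from by ring, Nat.doubleFactorial_add_two]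
    push_cast
    field_simp
    ring

open Polynomial in
theorem legendre_inversion_coeff (k n : ℕ) (hnk : n ≤ k) (heven : Even (k - n)) :
    (∫ y in (-1 : ℝ)..1, y ^ k * L n y * (1 / 2)) =
      (k.choose n : ℝ) * (n.factorial : ℝ) * Real.sqrt (2 * n + 1) *
        (Nat.doubleFactorial (k - n - 1) : ℝ) / (Nat.doubleFactorial (k + n + 1) : ℝ) := by
  have hL : (fun t : ℝ => (t ^ 2 - 1) ^ n) = fun t => eval t (Qaux n) := by
    funext t; simp [Qaux]
  have hID : iteratedDeriv n (fun t : ℝ => (t ^ 2 - 1) ^ n)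
      = fun y => eval y (derivative^[n] (Qaux n)) := by rw [hL, iterEval]
  have h1 : (∫ y in (-1:ℝ)..1, y ^ k * L n y * (1 / 2))
      = (Real.sqrt (2*n+1) / ((2:ℝ)^n * n.factorial) * (1/2)) *
        ∫ y in (-1:ℝ)..1, y ^ k * eval y (derivative^[n] (Qaux n)) := by
    rw [← intervalIntegral.integral_const_mul]
    congr 1; funext y
    simp only [L, hID]
    ring
  rw [h1, parts k n n le_rfl, Nat.sub_self]
  simp only [Function.iterate_zero, id_eq]
  have h2 : (∫ y in (-1:ℝ)..1, y^(k-n) * eval y (Qaux n))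
      = ∫ y in (-1:ℝ)..1, y^(k-n) * (y^2-1)^n := by
    congr 1; funext y; simp [Qaux]
  rw [h2, intA n (k-n) heven]
  rw [show k-n+2*n+1 = k+n+1 from by omega, Nat.doubleFactorial_two_mul,
    Nat.descFactorial_eq_factorial_mul_choose]
  have hsq : ((-1:ℝ))^n * (-1:ℝ)^n = 1 := by
    rw [← pow_add]
    exact Even.neg_one_pow ⟨n, rfl⟩
  have hf : ((n.factorial : ℝ)) ≠ 0 := by exact_mod_cast n.factorial_ne_zero
  have h2n : ((2:ℝ)^n) ≠ 0 := by positivity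
  have hd : ((Nat.doubleFactorial (k+n+1) : ℝ)) ≠ 0 := by
    exact_mod_cast (Nat.doubleFactorial_pos _).ne'
  push_cast
  field_simp
  linear_combination (k.choose n:ℝ) * hsq
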